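/- Fix an infinite cardinal κ, a K(κ)-free graph X on λ, and the graph Y of cliques-coded-as-functions as above (vertices: functions f with domain an ordinal < κ and range a clique of X, joined iff one strictly extends the other). Then for every injective edge-preserving map g from Y into X there exists a clique of size κ in X; hence no such g exists. -/

import Mathlib

open Cardinal

/-- Vertices of the graph `Y`: injective functions `f` whose domain is (the set
of elements below) an ordinal `α < κ` and whose range is a clique of `X`. -/
def FnVtx (kappa : Cardinal) {V : Type} (X : SimpleGraph V) : Type :=
  Σ a : kappa.ord.ToType,
    {f : {b : kappa.ord.ToType // b < a} → V //
      Function.Injective f ∧ X.IsClique (Set.range f)}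

/-- `u` is strictly extended by `v`. -/
def FnExt (kappa : Cardinal) {V : Type} (X : SimpleGraph V)
    (u v : FnVtx kappa X) : Prop :=
  ∃ h : u.1 < v.1, ∀ b : {b : kappa.ord.ToType // b < u.1},
    u.2.1 b = v.2.1 ⟨b.1, b.2.trans h⟩

/-- The graph `Y`: two vertices joined iff one strictly extends the other. -/
def fnGraph (kappa : Cardinal) {V : Type} (X : SimpleGraph V) :
    SimpleGraph (FnVtx kappa X) :=
  SimpleGraph.fromRel (FnExt kappa X)

section Aux

variable (kappa : Cardinal) {V : Type} (X : SimpleGraph V)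
variable (g : FnVtx kappa X → V) (v0 : V)

attribute [local instance] Classical.propDecidable

/-- The transfinite sequence `x_a = g(f_a)` where `f_a (b) = x_b` for `b < a`. -/
noncomputable def xseq : kappa.ord.ToType → V :=
  WellFounded.fix wellFounded_lt fun a rec =>
    if h : Function.Injective (fun b : {b : kappa.ord.ToType // b < a} => rec b.1 b.2) ∧
        X.IsClique (Set.range fun b : {b : kappa.ord.ToType // b < a} => rec b.1 b.2) then
      g ⟨a, fun b => rec b.1 b.2, h⟩
    else v0

theorem xseq_eq (a : kappa.ord.ToType) : xseq kappa X g v0 a =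
    if h : Function.Injective (fun b : {b : kappa.ord.ToType // b < a} =>
          xseq kappa X g v0 b.1) ∧
        X.IsClique (Set.range fun b : {b : kappa.ord.ToType // b < a} =>
          xseq kappa X g v0 b.1) then
      g ⟨a, fun b => xseq kappa X g v0 b.1, h⟩
    else v0 := by
  rw [xseq, WellFounded.fix_eq]

theorem xseq_good
    (hg : ∀ u v : FnVtx kappa X, (fnGraph kappa X).Adj u v → X.Adj (g u) (g v)) :
    ∀ a : kappa.ord.ToType,
      Function.Injective (fun b : {b : kappa.ord.ToType // b < a} =>
        xseq kappa X g v0 b.1) ∧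
      X.IsClique (Set.range fun b : {b : kappa.ord.ToType // b < a} =>
        xseq kappa X g v0 b.1) := by
  intro a
  induction a using WellFoundedLT.induction with
  | _ a IH =>
  have hx : ∀ b : kappa.ord.ToType, ∀ hb : b < a,
      xseq kappa X g v0 b = g ⟨b, fun c => xseq kappa X g v0 c.1, IH b hb⟩ := by
    intro b hb
    rw [xseq_eq]
    exact dif_pos (IH b hb)
  have hadj : ∀ b c : kappa.ord.ToType, b < a → c < a → b < c →
      X.Adj (xseq kappa X g v0 b) (xseq kappa X g v0 c) := by
    intro b c hb hc hbc
    rw [hx b hb, hx c hc]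
    apply hg
    refine (SimpleGraph.fromRel_adj (FnExt kappa X) _ _).mpr ?_
    constructor
    · intro h
      exact absurd (congrArg Sigma.fst h) hbc.ne
    · exact Or.inl ⟨hbc, fun d => rfl⟩
  constructor
  · intro b c h
    rcases lt_trichotomy b.1 c.1 with hlt | heq | hgt
    · exact absurd h (hadj b.1 c.1 b.2 c.2 hlt).ne
    · exact Subtype.ext heq
    · exact absurd h.symm (hadj c.1 b.1 c.2 b.2 hgt).ne
  · rintro _ ⟨b, rfl⟩ _ ⟨c, rfl⟩ hne
    rcases lt_trichotomy b.1 c.1 with hlt | heq | hgt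
    · exact hadj b.1 c.1 b.2 c.2 hlt
    · exact absurd (congrArg (fun d => xseq kappa X g v0 d) heq) hne
    · exact (hadj c.1 b.1 c.2 b.2 hgt).symm

theorem xseq_adj
    (hg : ∀ u v : FnVtx kappa X, (fnGraph kappa X).Adj u v → X.Adj (g u) (g v))
    {b c : kappa.ord.ToType} (hbc : b < c) :
    X.Adj (xseq kappa X g v0 b) (xseq kappa X g v0 c) := by
  have hb := xseq_good kappa X g v0 hg b
  have hc := xseq_good kappa X g v0 hg c
  rw [xseq_eq kappa X g v0 b, dif_pos hb, xseq_eq kappa X g v0 c, dif_pos hc]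
  apply hg
  refine (SimpleGraph.fromRel_adj (FnExt kappa X) _ _).mpr ?_
  constructor
  · intro h
    exact absurd (congrArg Sigma.fst h) hbc.ne
  · exact Or.inl ⟨hbc, fun d => rfl⟩

end Aux

/-- If `X` is `K(κ)`-free, then every injective edge-preserving map from `Y`
into `X` would produce a clique of size `κ` in `X`; hence no such map exists. -/
theorem stmt3 (kappa : Cardinal) (hkappa : ℵ₀ ≤ kappa) (V : Type)
    (X : SimpleGraph V) (hX : ¬ ∃ s : Set V, X.IsClique s ∧ #s = kappa) :
    ¬ ∃ g : FnVtx kappa X → V, Function.Injective g ∧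
      ∀ u v : FnVtx kappa X, (fnGraph kappa X).Adj u v → X.Adj (g u) (g v) := by
  rintro ⟨g, -, hg⟩
  -- the index type is nonempty
  have hk0 : kappa ≠ 0 := (aleph0_pos.trans_le hkappa).ne'
  have hT : Nonempty kappa.ord.ToType :=
    Ordinal.toType_nonempty_iff_ne_zero.2 (by simpa using hk0)
  obtain ⟨a⟩ := hT
  -- a least element of the index type, giving the empty vertex and a point of `V`
  set a₀ := wellFounded_lt.min Set.univ ⟨a, trivial⟩ with ha₀
  have hmin : ∀ b : kappa.ord.ToType, ¬ b < a₀ := fun b hb =>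
    wellFounded_lt.not_lt_min Set.univ (x := b) trivial hb
  haveI hE : IsEmpty {b : kappa.ord.ToType // b < a₀} := ⟨fun b => hmin b.1 b.2⟩
  have v0 : V := g ⟨a₀, fun b => (hE.elim b), fun b => (hE.elim b), by
    rw [Set.range_eq_empty]
    exact X.isClique_empty⟩
  set x : kappa.ord.ToType → V := xseq kappa X g v0 with hxdef
  have hadj : ∀ {b c : kappa.ord.ToType}, b < c → X.Adj (x b) (x c) :=
    fun hbc => xseq_adj kappa X g v0 hg hbc
  have hinj : Function.Injective x := by
    intro b c h
    rcases lt_trichotomy b c with hlt | heq | hgt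
    · exact absurd h (hadj hlt).ne
    · exact heq
    · exact absurd h.symm (hadj hgt).ne
  apply hX
  refine ⟨Set.range x, ?_, ?_⟩
  · rintro _ ⟨b, rfl⟩ _ ⟨c, rfl⟩ hne
    rcases lt_trichotomy b c with hlt | heq | hgt
    · exact hadj hlt
    · exact absurd (congrArg x heq) hne
    · exact (hadj hgt).symm
  · rw [Cardinal.mk_range_eq _ hinj, Cardinal.mk_ord_toType]
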